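/- Let ℚ be a probability measure on ℝ^𝖽 supported on a set 𝒳_Q ⊂ ℝ^𝖽 whose covering numbers satisfy N_{𝒳_Q}(ε, d|_{𝒳_Q}) ≍ ε^{−𝖽_Q} for ε ∈ (0,1], with 𝖽_Q ≤ 𝖽. If ℚ restricted to 𝒳_Q is a doubling measure on 𝒳_Q, i.e., there is C > 0 such that ℚ(B_d(x,2r) ∩ 𝒳_Q) ≤ C ℚ(B_d(x,r) ∩ 𝒳_Q) for all x ∈ 𝒳_Q and r > 0, then ρ_h(ℚ,ℚ) ≍ h^{−𝖽_Q} for h ∈ (0,1]. -/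

import Mathlib

open MeasureTheory
open scoped ENNReal

/-- The bandwidth-dependent similarity measure
`ρ_h(ℙ,ℚ) := ∫ 1/ℙ(B(x,h)) ℚ(dx)`, with the convention `1/0 = ∞`
(automatic in `ℝ≥0∞`). -/
noncomputable def rhoSim {X : Type*} [PseudoMetricSpace X] [MeasurableSpace X]
    (P Q : Measure X) (h : ℝ) : ℝ≥0∞ :=
  ∫⁻ x, (P (Metric.closedBall x h))⁻¹ ∂Q

/-- Covering number of `s` at scale `ε`: the smallest cardinality of a set of
closed `ε`-balls with centres in `s` covering `s` (`∞` if no finite cover exists). -/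
noncomputable def coverNum {X : Type*} [PseudoMetricSpace X] (s : Set X) (ε : ℝ) : ℝ≥0∞ :=
  sInf ((fun t : Finset X => (t.card : ℝ≥0∞)) ''
    {t : Finset X | ↑t ⊆ s ∧ s ⊆ ⋃ y ∈ t, Metric.closedBall y ε})

private lemma lintegral_biUnion_finset_le' {α β : Type*} [MeasurableSpace α] (μ : Measure α)
    (f : α → ℝ≥0∞) (t : Finset β) (s : β → Set α) :
    ∫⁻ x in ⋃ b ∈ t, s b, f x ∂μ ≤ ∑ b ∈ t, ∫⁻ x in s b, f x ∂μ := by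
  classical
  induction t using Finset.induction_on with
  | empty => simp
  | insert _ _ hnm ih =>
    rename_i a t
    rw [Finset.set_biUnion_insert, Finset.sum_insert hnm]
    calc ∫⁻ x in s a ∪ ⋃ b ∈ t, s b, f x ∂μ
        ≤ ∫⁻ x, f x ∂(μ.restrict (s a) + μ.restrict (⋃ b ∈ t, s b)) :=
          lintegral_mono' (Measure.restrict_union_le _ _) le_rfl
      _ = ∫⁻ x in s a, f x ∂μ + ∫⁻ x in ⋃ b ∈ t, s b, f x ∂μ := lintegral_add_measure _ _ _
      _ ≤ _ := add_le_add_right ih _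

/-- If `ℚ` is a probability measure on a `𝖽`-dimensional normed space, supported
on a set `𝒳_Q` whose covering numbers satisfy `N(ε) ≍ ε^{-𝖽_Q}` on `(0,1]`
(`𝖽_Q ≤ 𝖽`), and `ℚ` restricted to `𝒳_Q` is doubling on `𝒳_Q`, then
`ρ_h(ℚ,ℚ) ≍ h^{-𝖽_Q}` for `h ∈ (0,1]`. -/
theorem rho_self_asymp_of_doubling
    {E : Type*} [NormedAddCommGroup E] [NormedSpace ℝ E] [FiniteDimensional ℝ E]
    [MeasurableSpace E] [BorelSpace E]
    (dd dQ : ℕ) (hdim : Module.finrank ℝ E = dd) (hdQ : dQ ≤ dd)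
    (Q : Measure E) [IsProbabilityMeasure Q]
    (XQ : Set E) (hXQmeas : MeasurableSet XQ)
    -- `ℚ` is supported on `𝒳_Q`
    (hsupp : Q XQᶜ = 0)
    -- `N_{𝒳_Q}(ε) ≍ ε^{-𝖽_Q}` for `ε ∈ (0,1]`
    (hcov : ∃ c₁ c₂ : ℝ, 0 < c₁ ∧ 0 < c₂ ∧ ∀ ε : ℝ, 0 < ε → ε ≤ 1 →
      ENNReal.ofReal (c₁ * ε ^ (-(dQ : ℝ))) ≤ coverNum XQ ε ∧
        coverNum XQ ε ≤ ENNReal.ofReal (c₂ * ε ^ (-(dQ : ℝ))))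
    -- `ℚ|_{𝒳_Q}` is a doubling measure on `𝒳_Q`
    (hdouble : ∃ C : ℝ, 0 < C ∧ ∀ x ∈ XQ, ∀ r : ℝ, 0 < r →
      Q (Metric.closedBall x (2 * r) ∩ XQ) ≤ ENNReal.ofReal C * Q (Metric.closedBall x r ∩ XQ)) :
    ∃ c₁ c₂ : ℝ≥0∞, 0 < c₁ ∧ c₂ < ⊤ ∧ ∀ h : ℝ, 0 < h → h ≤ 1 →
      c₁ * ENNReal.ofReal (h ^ (-(dQ : ℝ))) ≤ rhoSim Q Q h ∧
        rhoSim Q Q h ≤ c₂ * ENNReal.ofReal (h ^ (-(dQ : ℝ))) := by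
  classical
  obtain ⟨c₁, c₂, hc₁, hc₂, hcovs⟩ := hcov
  obtain ⟨C, hC, hD⟩ := hdouble
  set oC := ENNReal.ofReal C with hoC
  -- the measure only charges `XQ`
  have hQeq : ∀ s : Set E, Q s = Q (s ∩ XQ) := by
    intro s
    refine le_antisymm ?_ (measure_mono Set.inter_subset_left)
    calc Q s ≤ Q ((s ∩ XQ) ∪ XQᶜ) := by
          refine measure_mono ?_
          intro x hx
          by_cases hxQ : x ∈ XQ
          · exact Or.inl ⟨hx, hxQ⟩
          · exact Or.inr hxQ
      _ ≤ Q (s ∩ XQ) + Q XQᶜ := measure_union_le _ _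
      _ = Q (s ∩ XQ) := by rw [hsupp, add_zero]
  have hQXQ : Q XQ = 1 := by
    have h1 := hQeq Set.univ
    rw [Set.univ_inter] at h1
    rw [← h1, measure_univ]
  have hcovfin : ∀ ε : ℝ, 0 < ε → ε ≤ 1 → coverNum XQ ε < ⊤ :=
    fun ε h1 h2 => lt_of_le_of_lt (hcovs ε h1 h2).2 ENNReal.ofReal_lt_top
  have hwitness : ∀ ε : ℝ, coverNum XQ ε < ⊤ →
      ∃ t : Finset E, ↑t ⊆ XQ ∧ XQ ⊆ ⋃ y ∈ t, Metric.closedBall y ε := by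
    intro ε hlt
    unfold coverNum at hlt
    obtain ⟨a, ⟨t, ht, rfl⟩, -⟩ := sInf_lt_iff.mp hlt
    exact ⟨t, ht.1, ht.2⟩
  have hbdd : Bornology.IsBounded XQ := by
    obtain ⟨t, -, hcover⟩ := hwitness 1 (hcovfin 1 one_pos le_rfl)
    refine Bornology.IsBounded.subset ?_ hcover
    exact (Bornology.isBounded_biUnion_finset t).mpr
      (fun y _ => Metric.isBounded_closedBall)
  -- positivity of measures of balls centered in XQ
  have hpos : ∀ x ∈ XQ, ∀ r : ℝ, 0 < r → 0 < Q (Metric.closedBall x r ∩ XQ) := by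
    intro x hx r hr
    have hiter : ∀ k : ℕ, Q (Metric.closedBall x (2 ^ k * r) ∩ XQ) ≤
        oC ^ k * Q (Metric.closedBall x r ∩ XQ) := by
      intro k
      induction k with
      | zero => simp
      | succ n ih =>
        have h2 : ((2:ℝ) ^ (n+1) * r) = 2 * (2 ^ n * r) := by ring
        rw [h2]
        calc Q (Metric.closedBall x (2 * (2 ^ n * r)) ∩ XQ)
            ≤ oC * Q (Metric.closedBall x (2 ^ n * r) ∩ XQ) := hD x hx _ (by positivity)
          _ ≤ oC * (oC ^ n * Q (Metric.closedBall x r ∩ XQ)) := mul_le_mul_right ih _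
          _ = oC ^ (n+1) * Q (Metric.closedBall x r ∩ XQ) := by ring
    obtain ⟨R, hR⟩ := hbdd.subset_closedBall x
    obtain ⟨k, hk⟩ : ∃ k : ℕ, R ≤ 2 ^ k * r := by
      obtain ⟨k, hk⟩ := pow_unbounded_of_one_lt (R / r) (one_lt_two (α := ℝ))
      refine ⟨k, ?_⟩
      rw [div_lt_iff₀ hr] at hk
      linarith
    have h1 : (1:ℝ≥0∞) ≤ oC ^ k * Q (Metric.closedBall x r ∩ XQ) := by
      refine le_trans ?_ (hiter k)
      have hsub : XQ ⊆ Metric.closedBall x (2 ^ k * r) ∩ XQ := fun y hy =>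
        ⟨Metric.closedBall_subset_closedBall hk (hR hy), hy⟩
      calc (1:ℝ≥0∞) = Q XQ := hQXQ.symm
        _ ≤ _ := measure_mono hsub
    by_contra hzero
    push_neg at hzero
    have hz : Q (Metric.closedBall x r ∩ XQ) = 0 := le_antisymm hzero zero_le
    rw [hz, mul_zero] at h1
    exact (by norm_num : ¬ ((1:ℝ≥0∞) ≤ 0)) h1
  -- iterated doubling (twice)
  have hdouble2 : ∀ x ∈ XQ, ∀ h : ℝ, 0 < h →
      Q (Metric.closedBall x (3 * h / 2) ∩ XQ) ≤
        oC ^ 2 * Q (Metric.closedBall x (h / 2) ∩ XQ) := by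
    intro x hx h hh
    have e1 : (3:ℝ) * h / 2 = 2 * (3 * h / 4) := by ring
    have e2 : (3:ℝ) * h / 4 = 2 * (3 * h / 8) := by ring
    calc Q (Metric.closedBall x (3 * h / 2) ∩ XQ)
        = Q (Metric.closedBall x (2 * (3 * h / 4)) ∩ XQ) := by rw [← e1]
      _ ≤ oC * Q (Metric.closedBall x (3 * h / 4) ∩ XQ) := hD x hx _ (by linarith)
      _ = oC * Q (Metric.closedBall x (2 * (3 * h / 8)) ∩ XQ) := by rw [← e2]
      _ ≤ oC * (oC * Q (Metric.closedBall x (3 * h / 8) ∩ XQ)) :=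
          mul_le_mul_right (hD x hx _ (by linarith)) _
      _ ≤ oC * (oC * Q (Metric.closedBall x (h / 2) ∩ XQ)) := by
          refine mul_le_mul_right (mul_le_mul_right (measure_mono ?_) _) _
          exact Set.inter_subset_inter_left _
            (Metric.closedBall_subset_closedBall (by linarith))
      _ = oC ^ 2 * Q (Metric.closedBall x (h / 2) ∩ XQ) := by ring
  -- trivial lower bound `1 ≤ ρ_h`
  have hrho1 : ∀ h : ℝ, (1:ℝ≥0∞) ≤ rhoSim Q Q h := by
    intro h
    calc (1:ℝ≥0∞) = ∫⁻ _, 1 ∂Q := by rw [lintegral_one, measure_univ]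
      _ ≤ rhoSim Q Q h := lintegral_mono fun x => ENNReal.one_le_inv.mpr prob_le_one
  -- UPPER BOUND
  have hub : ∀ h : ℝ, 0 < h → h ≤ 1 →
      rhoSim Q Q h ≤ (ENNReal.ofReal (c₂ * 2 ^ (dQ:ℝ)) + 1) *
        ENNReal.ofReal (h ^ (-(dQ:ℝ))) := by
    intro h h0 h1
    have hh2 : (0:ℝ) < h / 2 := by linarith
    have hfin := hcovfin (h/2) hh2 (by linarith)
    have hlt : coverNum XQ (h/2) < coverNum XQ (h/2) + 1 :=
      ENNReal.lt_add_right hfin.ne one_ne_zero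
    unfold coverNum at hlt
    obtain ⟨a, ⟨t, ⟨htsub, htcov⟩, rfl⟩, hcard⟩ := sInf_lt_iff.mp hlt
    have hUmeas : MeasurableSet (⋃ y ∈ t, Metric.closedBall y (h/2)) :=
      t.measurableSet_biUnion fun y _ => measurableSet_closedBall
    have hcompl : Q (⋃ y ∈ t, Metric.closedBall y (h/2))ᶜ = 0 :=
      measure_mono_null (Set.compl_subset_compl.mpr htcov) hsupp
    have step1 : rhoSim Q Q h =
        ∫⁻ x in ⋃ y ∈ t, Metric.closedBall y (h/2), (Q (Metric.closedBall x h))⁻¹ ∂Q := by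
      unfold rhoSim
      rw [← lintegral_add_compl (fun x => (Q (Metric.closedBall x h))⁻¹) hUmeas,
        setLIntegral_measure_zero _ _ hcompl, add_zero]
    have step3 : ∀ y ∈ t,
        ∫⁻ x in Metric.closedBall y (h/2), (Q (Metric.closedBall x h))⁻¹ ∂Q ≤ 1 := by
      intro y hy
      have hsub : ∀ x ∈ Metric.closedBall y (h/2),
          Metric.closedBall y (h/2) ⊆ Metric.closedBall x h := by
        intro x hx z hz
        rw [Metric.mem_closedBall] at hx hz ⊢
        calc dist z x ≤ dist z y + dist y x := dist_triangle _ _ _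
          _ ≤ h/2 + h/2 := add_le_add hz (by rwa [dist_comm])
          _ = h := by ring
      calc ∫⁻ x in Metric.closedBall y (h/2), (Q (Metric.closedBall x h))⁻¹ ∂Q
          ≤ ∫⁻ _ in Metric.closedBall y (h/2), (Q (Metric.closedBall y (h/2)))⁻¹ ∂Q :=
            setLIntegral_mono' measurableSet_closedBall (fun x hx =>
              ENNReal.inv_le_inv' (measure_mono (hsub x hx)))
        _ = (Q (Metric.closedBall y (h/2)))⁻¹ * Q (Metric.closedBall y (h/2)) :=
            setLIntegral_const _ _
        _ ≤ 1 := ENNReal.inv_mul_le_one _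
    have step4 : rhoSim Q Q h ≤ (t.card : ℝ≥0∞) := by
      rw [step1]
      refine le_trans (lintegral_biUnion_finset_le' Q _ t _) ?_
      calc ∑ y ∈ t, ∫⁻ x in Metric.closedBall y (h/2), (Q (Metric.closedBall x h))⁻¹ ∂Q
          ≤ ∑ _y ∈ t, (1:ℝ≥0∞) := Finset.sum_le_sum step3
        _ = (t.card : ℝ≥0∞) := by simp
    have hcard2 : (t.card : ℝ≥0∞) ≤ ENNReal.ofReal (c₂ * (h/2) ^ (-(dQ:ℝ))) + 1 :=
      le_trans hcard.le (add_le_add_left (hcovs (h/2) hh2 (by linarith)).2 1)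
    have h2d : ((2:ℝ)⁻¹) ^ (-(dQ:ℝ)) = 2 ^ (dQ:ℝ) := by
      rw [Real.inv_rpow (by norm_num), Real.rpow_neg (by norm_num), inv_inv]
    have halg : c₂ * (h/2) ^ (-(dQ:ℝ)) = (c₂ * 2 ^ (dQ:ℝ)) * h ^ (-(dQ:ℝ)) := by
      rw [div_eq_mul_inv, Real.mul_rpow h0.le (by norm_num), h2d]
      ring
    have hone : (1:ℝ≥0∞) ≤ ENNReal.ofReal (h ^ (-(dQ:ℝ))) := by
      rw [ENNReal.one_le_ofReal]
      exact Real.one_le_rpow_of_pos_of_le_one_of_nonpos h0 h1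
        (neg_nonpos.mpr (Nat.cast_nonneg dQ))
    calc rhoSim Q Q h ≤ (t.card : ℝ≥0∞) := step4
      _ ≤ ENNReal.ofReal ((c₂ * 2 ^ (dQ:ℝ)) * h ^ (-(dQ:ℝ))) + 1 := by
          rw [← halg]; exact hcard2
      _ = ENNReal.ofReal (c₂ * 2 ^ (dQ:ℝ)) * ENNReal.ofReal (h ^ (-(dQ:ℝ))) + 1 := by
          rw [ENNReal.ofReal_mul (by positivity)]
      _ ≤ ENNReal.ofReal (c₂ * 2 ^ (dQ:ℝ)) * ENNReal.ofReal (h ^ (-(dQ:ℝ))) +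
            1 * ENNReal.ofReal (h ^ (-(dQ:ℝ))) := by
          exact add_le_add_right (by rw [one_mul]; exact hone) _
      _ = (ENNReal.ofReal (c₂ * 2 ^ (dQ:ℝ)) + 1) * ENNReal.ofReal (h ^ (-(dQ:ℝ))) := by
          ring
  -- LOWER BOUND (small h)
  have hlb : ∀ h : ℝ, 0 < h → 3 * h ≤ 1 →
      ENNReal.ofReal (c₁ * 3 ^ (-(dQ:ℝ))) * (oC ^ 2)⁻¹ *
        ENNReal.ofReal (h ^ (-(dQ:ℝ))) ≤ rhoSim Q Q h := by
    intro h h0 h31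
    obtain ⟨tc, htc_sub, htc_cov⟩ := hwitness h (hcovfin h h0 (by linarith))
    -- maximal 3h-separated subset of XQ
    set S : Set ℕ := {n : ℕ | ∃ t : Finset E, (↑t ⊆ XQ ∧
      ∀ a ∈ t, ∀ b ∈ t, a ≠ b → 3 * h < dist a b) ∧ t.card = n} with hS
    have hgdef : ∀ a ∈ XQ, ∃ y ∈ tc, a ∈ Metric.closedBall y h := by
      intro a ha
      have := htc_cov ha
      simpa using this
    have hbound : ∀ t : Finset E, ↑t ⊆ XQ →
        (∀ a ∈ t, ∀ b ∈ t, a ≠ b → 3 * h < dist a b) → t.card ≤ tc.card := by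
      intro t htQ htsep
      set g : E → E := fun a => if h' : ∃ y ∈ tc, a ∈ Metric.closedBall y h
        then h'.choose else a with hg
      have hg1 : ∀ a ∈ t, g a ∈ tc := by
        intro a ha
        have h' := hgdef a (htQ ha)
        simp only [hg, dif_pos h']
        exact h'.choose_spec.1
      have hg2 : ∀ a ∈ t, a ∈ Metric.closedBall (g a) h := by
        intro a ha
        have h' := hgdef a (htQ ha)
        simp only [hg, dif_pos h']
        exact h'.choose_spec.2
      refine Finset.card_le_card_of_injOn g hg1 ?_
      intro a ha b hb hab
      by_contra hne
      have hda := hg2 a ha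
      have hdb := hg2 b hb
      rw [Metric.mem_closedBall] at hda hdb
      have : dist a b ≤ 2 * h := by
        calc dist a b ≤ dist a (g a) + dist (g a) b := dist_triangle _ _ _
          _ = dist a (g a) + dist b (g b) := by rw [hab, dist_comm (g b) b]
          _ ≤ h + h := add_le_add hda hdb
          _ = 2 * h := by ring
      have h3 := htsep a ha b hb hne
      linarith
    have hSne : S.Nonempty := ⟨0, ∅, ⟨by simp, by simp⟩, rfl⟩
    have hSbdd : BddAbove S := ⟨tc.card, fun n hn => by
      obtain ⟨t, ⟨h1', h2'⟩, hn'⟩ := hn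
      exact hn' ▸ hbound t h1' h2'⟩
    obtain ⟨t₀, ⟨ht₀Q, ht₀sep⟩, hcard₀⟩ := Nat.sSup_mem hSne hSbdd
    -- maximality gives a cover at scale 3h
    have hcov3 : XQ ⊆ ⋃ y ∈ t₀, Metric.closedBall y (3*h) := by
      intro x hx
      by_contra hxn
      have hfar : ∀ y ∈ t₀, 3*h < dist x y := by
        intro y hy
        by_contra hle
        push_neg at hle
        exact hxn (Set.mem_biUnion hy (by rwa [Metric.mem_closedBall]))
      have hxnot : x ∉ t₀ := by
        intro hxt
        have := hfar x hxt
        simp only [dist_self] at this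
        linarith
      have hPins : (↑(insert x t₀) : Set E) ⊆ XQ ∧
          ∀ a ∈ insert x t₀, ∀ b ∈ insert x t₀, a ≠ b → 3 * h < dist a b := by
        constructor
        · rw [Finset.coe_insert]
          exact Set.insert_subset hx ht₀Q
        · intro a ha b hb hab
          rw [Finset.mem_insert] at ha hb
          rcases ha with rfl | ha
          · rcases hb with rfl | hb
            · exact absurd rfl hab
            · exact hfar b hb
          · rcases hb with rfl | hb
            · rw [dist_comm]; exact hfar a ha
            · exact ht₀sep a ha b hb hab
      have hmem : (insert x t₀).card ∈ S := ⟨_, hPins, rfl⟩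
      have hle := le_csSup hSbdd hmem
      rw [Finset.card_insert_of_notMem hxnot, hcard₀] at hle
      omega
    have hcN : coverNum XQ (3*h) ≤ (t₀.card : ℝ≥0∞) :=
      sInf_le ⟨t₀, ⟨ht₀Q, hcov3⟩, rfl⟩
    have hcN2 : ENNReal.ofReal (c₁ * (3*h) ^ (-(dQ:ℝ))) ≤ (t₀.card : ℝ≥0∞) :=
      le_trans (hcovs (3*h) (by linarith) h31).1 hcN
    -- disjointness of (h/2)-balls
    have hdisj : (↑t₀ : Set E).PairwiseDisjoint
        (fun y => Metric.closedBall y (h/2)) := by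
      intro a ha b hb hab
      have hsep := ht₀sep a ha b hb hab
      rw [Function.onFun, Set.disjoint_left]
      intro z hza hzb
      rw [Metric.mem_closedBall] at hza hzb
      have : dist a b ≤ h := by
        calc dist a b ≤ dist a z + dist z b := dist_triangle _ _ _
          _ = dist z a + dist z b := by rw [dist_comm]
          _ ≤ h/2 + h/2 := add_le_add hza hzb
          _ = h := by ring
      linarith
    -- each ball contributes at least (oC^2)⁻¹
    have hterm : ∀ y ∈ t₀, (oC^2)⁻¹ ≤
        ∫⁻ x in Metric.closedBall y (h/2), (Q (Metric.closedBall x h))⁻¹ ∂Q := by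
      intro y hy
      have hyQ : y ∈ XQ := ht₀Q hy
      have hsub : ∀ x ∈ Metric.closedBall y (h/2),
          Metric.closedBall x h ⊆ Metric.closedBall y (3*h/2) := by
        intro x hx z hz
        rw [Metric.mem_closedBall] at hx hz ⊢
        calc dist z y ≤ dist z x + dist x y := dist_triangle _ _ _
          _ ≤ h + h/2 := add_le_add hz hx
          _ = 3*h/2 := by ring
      have h1 : (Q (Metric.closedBall y (3*h/2)))⁻¹ * Q (Metric.closedBall y (h/2)) ≤
          ∫⁻ x in Metric.closedBall y (h/2), (Q (Metric.closedBall x h))⁻¹ ∂Q := by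
        rw [← setLIntegral_const (Metric.closedBall y (h/2))
          ((Q (Metric.closedBall y (3*h/2)))⁻¹)]
        exact setLIntegral_mono' measurableSet_closedBall (fun x hx =>
          ENNReal.inv_le_inv' (measure_mono (hsub x hx)))
      have hQfin : Q (Metric.closedBall y (h/2)) ≠ ⊤ := measure_ne_top _ _
      have hQpos : Q (Metric.closedBall y (h/2)) ≠ 0 :=
        (lt_of_lt_of_le (hpos y hyQ (h/2) (by linarith))
          (measure_mono Set.inter_subset_left)).ne'
      have h2 : Q (Metric.closedBall y (3*h/2)) ≤ oC^2 * Q (Metric.closedBall y (h/2)) := by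
        calc Q (Metric.closedBall y (3*h/2))
            = Q (Metric.closedBall y (3*h/2) ∩ XQ) := hQeq _
          _ ≤ oC^2 * Q (Metric.closedBall y (h/2) ∩ XQ) := hdouble2 y hyQ h h0
          _ ≤ oC^2 * Q (Metric.closedBall y (h/2)) :=
              mul_le_mul_right (measure_mono Set.inter_subset_left) _
      have hoCfin : oC^2 ≠ ⊤ := ENNReal.pow_ne_top ENNReal.ofReal_ne_top
      calc (oC^2)⁻¹
          = (oC^2)⁻¹ * ((Q (Metric.closedBall y (h/2)))⁻¹ * Q (Metric.closedBall y (h/2))) := by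
            rw [ENNReal.inv_mul_cancel hQpos hQfin, mul_one]
        _ = (oC^2 * Q (Metric.closedBall y (h/2)))⁻¹ * Q (Metric.closedBall y (h/2)) := by
            rw [ENNReal.mul_inv (Or.inr hQfin) (Or.inl hoCfin), mul_assoc]
        _ ≤ (Q (Metric.closedBall y (3*h/2)))⁻¹ * Q (Metric.closedBall y (h/2)) :=
            mul_le_mul_left (ENNReal.inv_le_inv' h2) _
        _ ≤ _ := h1
    have hfinal : (t₀.card : ℝ≥0∞) * (oC^2)⁻¹ ≤ rhoSim Q Q h := by
      calc (t₀.card : ℝ≥0∞) * (oC^2)⁻¹ = ∑ _y ∈ t₀, (oC^2)⁻¹ := by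
            rw [Finset.sum_const, nsmul_eq_mul]
        _ ≤ ∑ y ∈ t₀, ∫⁻ x in Metric.closedBall y (h/2),
              (Q (Metric.closedBall x h))⁻¹ ∂Q := Finset.sum_le_sum hterm
        _ = ∫⁻ x in ⋃ y ∈ t₀, Metric.closedBall y (h/2),
              (Q (Metric.closedBall x h))⁻¹ ∂Q := by
            rw [lintegral_biUnion_finset hdisj (fun y _ => measurableSet_closedBall)]
        _ ≤ rhoSim Q Q h := setLIntegral_le_lintegral _ _
    have h3alg : c₁ * (3*h) ^ (-(dQ:ℝ)) = (c₁ * 3 ^ (-(dQ:ℝ))) * h ^ (-(dQ:ℝ)) := by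
      rw [Real.mul_rpow (by norm_num) h0.le]
      ring
    calc ENNReal.ofReal (c₁ * 3 ^ (-(dQ:ℝ))) * (oC^2)⁻¹ * ENNReal.ofReal (h ^ (-(dQ:ℝ)))
        = ENNReal.ofReal (c₁ * 3 ^ (-(dQ:ℝ))) * ENNReal.ofReal (h ^ (-(dQ:ℝ))) * (oC^2)⁻¹ := by
          ring
      _ = ENNReal.ofReal (c₁ * (3*h) ^ (-(dQ:ℝ))) * (oC^2)⁻¹ := by
          rw [← ENNReal.ofReal_mul (by positivity), ← h3alg]
      _ ≤ (t₀.card : ℝ≥0∞) * (oC^2)⁻¹ := mul_le_mul_left hcN2 _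
      _ ≤ rhoSim Q Q h := hfinal
  -- ASSEMBLY
  refine ⟨min (ENNReal.ofReal ((3:ℝ) ^ (dQ:ℝ)))⁻¹
      (ENNReal.ofReal (c₁ * 3 ^ (-(dQ:ℝ))) * (oC^2)⁻¹),
    ENNReal.ofReal (c₂ * 2 ^ (dQ:ℝ)) + 1, ?_, ?_, ?_⟩
  · apply lt_min
    · exact ENNReal.inv_pos.mpr ENNReal.ofReal_ne_top
    · refine ENNReal.mul_pos ?_ ?_
      · exact (ENNReal.ofReal_pos.mpr
          (mul_pos hc₁ (Real.rpow_pos_of_pos (by norm_num) _))).ne'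
      · exact (ENNReal.inv_pos.mpr (ENNReal.pow_ne_top ENNReal.ofReal_ne_top)).ne'
  · exact ENNReal.add_lt_top.mpr ⟨ENNReal.ofReal_lt_top, ENNReal.one_lt_top⟩
  · intro h h0 h1
    refine ⟨?_, hub h h0 h1⟩
    by_cases h3 : 3 * h ≤ 1
    · exact le_trans (mul_le_mul_left (min_le_right _ _) _) (hlb h h0 h3)
    · push_neg at h3
      have hX : h ^ (-(dQ:ℝ)) ≤ (3:ℝ) ^ (dQ:ℝ) := by
        have h13 : (1/3 : ℝ) ≤ h := by linarith
        calc h ^ (-(dQ:ℝ)) ≤ (1/3:ℝ) ^ (-(dQ:ℝ)) :=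
            Real.rpow_le_rpow_of_nonpos (by norm_num) h13
              (neg_nonpos.mpr (Nat.cast_nonneg dQ))
          _ = 3 ^ (dQ:ℝ) := by
            rw [one_div, Real.inv_rpow (by norm_num), Real.rpow_neg (by norm_num), inv_inv]
      calc min (ENNReal.ofReal ((3:ℝ) ^ (dQ:ℝ)))⁻¹
            (ENNReal.ofReal (c₁ * 3 ^ (-(dQ:ℝ))) * (oC^2)⁻¹) *
            ENNReal.ofReal (h ^ (-(dQ:ℝ)))
          ≤ (ENNReal.ofReal ((3:ℝ) ^ (dQ:ℝ)))⁻¹ * ENNReal.ofReal ((3:ℝ) ^ (dQ:ℝ)) :=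
            mul_le_mul' (min_le_left _ _) (ENNReal.ofReal_le_ofReal hX)
        _ ≤ 1 := ENNReal.inv_mul_le_one _
        _ ≤ rhoSim Q Q h := hrho1 h
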